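/- Let f be Q-regular with parameters 0 ≤ μ ≤ L (i.e., μ‖h‖⁴ ≤ D⁴f(z)[h]⁴ ≤ L‖h‖⁴ on the relevant set), convex, and C⁴. Then for all x, y and all γ ∈ [1/3, 1/2]: f(y) ≥ f(x) + ⟨∇f(x), y−x⟩ + ((3γ−1)/(6γ)) ∇²f(x)[y−x,y−x] + (μ/24)‖y−x‖⁴ [ (1−2γ) − (16/125)(L/μ − 1)((3γ−1)/γ)³ ]. -/

import Mathlib

set_option maxHeartbeats 1000000

open intervalIntegral Set Filter

variable {n : ℕ}

private lemma line_hasDerivAt (x h : EuclideanSpace ℝ (Fin n)) (t : ℝ) :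
    HasDerivAt (fun s : ℝ => x + s • h) h t := by
  simpa using ((hasDerivAt_id t).smul_const h).const_add x

private lemma chainG (f : EuclideanSpace ℝ (Fin n) → ℝ) (hf : ContDiff ℝ 4 f)
    (x h : EuclideanSpace ℝ (Fin n)) (k : ℕ) (hk : k < 4) (t : ℝ) :
    HasDerivAt (fun s : ℝ => iteratedFDeriv ℝ k f (x + s • h) (fun _ => h))
      (iteratedFDeriv ℝ (k+1) f (x + t • h) (fun _ => h)) t := by
  have hdiff : Differentiable ℝ (iteratedFDeriv ℝ k f) :=
    hf.differentiable_iteratedFDeriv (by exact_mod_cast hk)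
  have h1 : HasDerivAt (fun s : ℝ => iteratedFDeriv ℝ k f (x + s • h))
      (fderiv ℝ (iteratedFDeriv ℝ k f) (x + t • h) h) t :=
    (hdiff (x + t • h)).hasFDerivAt.comp_hasDerivAt t (line_hasDerivAt x h t)
  have h2 := ((ContinuousMultilinearMap.apply ℝ (fun _ : Fin k => EuclideanSpace ℝ (Fin n)) ℝ
      (fun _ => h)).hasFDerivAt.comp_hasDerivAt t h1)
  convert h2 using 1
  · rfl
  · rfl
  · rfl
  rw [iteratedFDeriv_succ_apply_left]; rfl

private lemma contG (f : EuclideanSpace ℝ (Fin n) → ℝ) (hf : ContDiff ℝ 4 f)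
    (x h : EuclideanSpace ℝ (Fin n)) :
    Continuous (fun s : ℝ => iteratedFDeriv ℝ 4 f (x + s • h) (fun _ => h)) := by
  have hline : Continuous (fun s : ℝ => x + s • h) := by continuity
  exact (ContinuousMultilinearMap.apply ℝ (fun _ : Fin 4 => EuclideanSpace ℝ (Fin n)) ℝ
      (fun _ => h)).continuous.comp ((hf.continuous_iteratedFDeriv le_rfl).comp hline)

private lemma arith_sqrt_lb {s δ : ℝ} (h2 : s^2 = 9-4*δ) (hn : 0 ≤ s) (hδ : δ ≤ 1) : 2 ≤ s := by
  nlinarith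

private lemma arith_sqrt_ub {s δ : ℝ} (h2 : s^2 = 9-4*δ) (hn : 0 ≤ s) (hδ : 0 ≤ δ) : s ≤ 3 := by
  nlinarith

private lemma arith_M {t0 : ℝ} (h0 : 0 ≤ t0) (h5 : t0 ≤ 1/2) :
    0 ≤ 182 - 307*t0 + 144*t0^2 - 16*t0^3 := by
  nlinarith

private lemma arith_t0le {γ t0 δ : ℝ} (hγ1 : 1/3 ≤ γ) (hγ2 : γ ≤ 1/2) (hγ0 : 0 < γ)
    (hq : t0^2 = 3*t0-δ) (hγδ : γ*δ = 3*γ-1) (ht00 : 0 ≤ t0) (ht05 : t0 ≤ 1/2) : t0 ≤ γ := by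
  have hE : (γ - t0) * (3 - γ - t0) = 3*γ - γ^2 - δ := by linear_combination hq
  have h1γ : (0:ℝ) ≤ 1 - γ := by linarith
  have hE2 : 0 ≤ 3*γ - γ^2 - δ := by
    nlinarith [hγδ, mul_nonneg (mul_nonneg h1γ h1γ) h1γ, hγ0]
  nlinarith [hE, hE2, ht05, hγ2, ht00]

private lemma arith_numeric {L μ R u v w γ d : ℝ} (hμ : 0 < μ) (hμL : μ ≤ L) (hR : 0 ≤ R)
    (hsum : (u + v) + w = (1-2*γ)/24) (hu : 0 ≤ u + (2/375)*d^3) :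
    (L*R)*u + (μ*R)*v + (μ*R)*w ≥ μ*R*(1-2*γ)/24 - (L-μ)*R*(2/375)*d^3 := by
  nlinarith [mul_nonneg (mul_nonneg (sub_nonneg.2 hμL) hR) hu, mul_nonneg hμ.le hR, hsum]


/-- Lower growth bound for a convex, C⁴, quartic-regular function with parameters
`0 < μ ≤ L`: for all `x, y` and `γ ∈ [1/3, 1/2]`,
`f(y) ≥ f(x) + ⟨∇f(x),y−x⟩ + ((3γ−1)/(6γ))∇²f(x)[y−x]²
  + (μ/24)‖y−x‖⁴[(1−2γ) − (16/125)(L/μ−1)((3γ−1)/γ)³]`. -/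
theorem qregular_lower_bound {n : ℕ}
    (f : EuclideanSpace ℝ (Fin n) → ℝ) (μ L : ℝ)
    (hμ : 0 < μ) (hμL : μ ≤ L)
    (hf : ContDiff ℝ 4 f)
    (hconv : ConvexOn ℝ Set.univ f)
    (hlow : ∀ (z h : EuclideanSpace ℝ (Fin n)),
      μ * ‖h‖ ^ 4 ≤ iteratedFDeriv ℝ 4 f z ![h, h, h, h])
    (hup : ∀ (z h : EuclideanSpace ℝ (Fin n)),
      iteratedFDeriv ℝ 4 f z ![h, h, h, h] ≤ L * ‖h‖ ^ 4)
    (x y : EuclideanSpace ℝ (Fin n)) (γ : ℝ) (hγ : γ ∈ Set.Icc (1/3 : ℝ) (1/2 : ℝ)) :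
    f y ≥ f x + fderiv ℝ f x (y - x)
      + ((3 * γ - 1) / (6 * γ)) * iteratedFDeriv ℝ 2 f x ![y - x, y - x]
      + (μ / 24) * ‖y - x‖ ^ 4
        * ((1 - 2 * γ) - (16 / 125) * (L / μ - 1) * ((3 * γ - 1) / γ) ^ 3) := by
  obtain ⟨hγ1, hγ2⟩ := hγ
  have hγ0 : (0:ℝ) < γ := by linarith
  have hγne : γ ≠ 0 := ne_of_gt hγ0
  set h : EuclideanSpace ℝ (Fin n) := y - x with hh
  have hv4 : (![h, h, h, h] : Fin 4 → EuclideanSpace ℝ (Fin n)) = (fun _ => h) := by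
    funext i; fin_cases i <;> rfl
  have hv2 : (![h, h] : Fin 2 → EuclideanSpace ℝ (Fin n)) = (fun _ => h) := by
    funext i; fin_cases i <;> rfl
  set r : ℝ := ‖h‖ with hr
  have hr0 : (0:ℝ) ≤ r := norm_nonneg _
  -- the one-dimensional restriction and its derivatives
  set g0 : ℝ → ℝ := fun t => f (x + t • h) with hg0
  set g1 : ℝ → ℝ := fun t => iteratedFDeriv ℝ 1 f (x + t • h) (fun _ => h) with hg1
  set g2 : ℝ → ℝ := fun t => iteratedFDeriv ℝ 2 f (x + t • h) (fun _ => h) with hg2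
  set g3 : ℝ → ℝ := fun t => iteratedFDeriv ℝ 3 f (x + t • h) (fun _ => h) with hg3
  set g4 : ℝ → ℝ := fun t => iteratedFDeriv ℝ 4 f (x + t • h) (fun _ => h) with hg4
  have hd0 : ∀ t, HasDerivAt g0 (g1 t) t := fun t => by
    have := chainG f hf x h 0 (by norm_num) t
    simpa [hg0, hg1] using this
  have hd1 : ∀ t, HasDerivAt g1 (g2 t) t := fun t => by
    have := chainG f hf x h 1 (by norm_num) t
    simpa [hg1, hg2] using this
  have hd2 : ∀ t, HasDerivAt g2 (g3 t) t := fun t => by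
    have := chainG f hf x h 2 (by norm_num) t
    simpa [hg2, hg3] using this
  have hd3 : ∀ t, HasDerivAt g3 (g4 t) t := fun t => by
    have := chainG f hf x h 3 (by norm_num) t
    simpa [hg3, hg4] using this
  have hc4 : Continuous g4 := by
    have := contG f hf x h
    rwa [hg4]
  have hg4low : ∀ t, μ * r ^ 4 ≤ g4 t := fun t => by
    have := hlow (x + t • h) h; rwa [hv4] at this
  have hg4up : ∀ t, g4 t ≤ L * r ^ 4 := fun t => by
    have := hup (x + t • h) h; rwa [hv4] at this
  -- convexity of the restriction
  have hgc : ConvexOn ℝ Set.univ g0 := by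
    have h1 := hconv.comp_affineMap
      (AffineMap.lineMap x (x + h) : ℝ →ᵃ[ℝ] EuclideanSpace ℝ (Fin n))
    have h2 : (f ∘ (AffineMap.lineMap x (x + h) : ℝ →ᵃ[ℝ] EuclideanSpace ℝ (Fin n))) = g0 := by
      funext t
      simp [AffineMap.lineMap_apply, hg0, add_comm]
    rw [h2] at h1
    simpa using h1
  have hg2γ : 0 ≤ g2 γ := by
    have hm : ∀ u : ℝ, γ < u → g1 γ ≤ g1 u := by
      intro u hu
      have ha := hgc.le_slope_of_hasDerivAt (Set.mem_univ γ) (Set.mem_univ u) hu (hd0 γ)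
      have hb := hgc.slope_le_of_hasDerivAt (Set.mem_univ γ) (Set.mem_univ u) hu (hd0 u)
      linarith
    have ht : Filter.Tendsto (slope g1 γ) (nhdsWithin γ (Set.Ioi γ)) (nhds (g2 γ)) :=
      (hasDerivAt_iff_tendsto_slope.mp (hd1 γ)).mono_left
        (nhdsWithin_mono γ (fun u hu => ne_of_gt hu))
    refine ge_of_tendsto ht (eventually_nhdsWithin_of_forall ?_)
    intro u hu
    have h1 : 0 ≤ g1 u - g1 γ := sub_nonneg.2 (hm u hu)
    have h2 : 0 < u - γ := sub_pos.2 hu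
    have : slope g1 γ u = (g1 u - g1 γ) / (u - γ) := by
      rw [slope_def_field]
    rw [this]
    positivity
  -- Taylor identities with integral remainder
  set p : ℝ → ℝ := fun t => (1-t)^3/6 * g4 t with hp
  set q : ℝ → ℝ := fun t => (γ-t) * g4 t with hq'
  have hcp : Continuous p := by
    rw [hp]; fun_prop
  have hcq : Continuous q := by
    rw [hq']; fun_prop
  have hF1 : ∀ t : ℝ, HasDerivAt
      (fun u => g0 u + (1-u)*g1 u + ((1-u)^2/2)*g2 u + ((1-u)^3/6)*g3 u) (p t) t := by
    intro t
    have A1 : HasDerivAt (fun u : ℝ => 1 - u) (-1) t := by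
      simpa using (hasDerivAt_id t).const_sub 1
    have T1 := A1.mul (hd1 t)
    have T2 := ((A1.pow 2).div_const 2).mul (hd2 t)
    have T3 := ((A1.pow 3).div_const 6).mul (hd3 t)
    have S := (((hd0 t).add T1).add T2).add T3
    convert S using 1
    · rfl
    · rfl
    · rfl
    rw [hp]; simp only [Pi.pow_apply]; ring
  have hI1 : ∫ t in (0:ℝ)..1, p t
      = g0 1 - g0 0 - g1 0 - (1/2)*g2 0 - (1/6)*g3 0 := by
    rw [integral_eq_sub_of_hasDerivAt (fun t _ => hF1 t) (hcp.intervalIntegrable 0 1)]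
    norm_num
    ring
  have hF2 : ∀ t : ℝ, HasDerivAt (fun u => g2 u + (γ-u)*g3 u) (q t) t := by
    intro t
    have A2 : HasDerivAt (fun u : ℝ => γ - u) (-1) t := by
      simpa using (hasDerivAt_id t).const_sub γ
    have S := (hd2 t).add (A2.mul (hd3 t))
    convert S using 1
    · rfl
    · rfl
    · rfl
    rw [hq']; ring
  have hI2 : ∫ t in (0:ℝ)..γ, q t = g2 γ - g2 0 - γ * g3 0 := by
    rw [integral_eq_sub_of_hasDerivAt (fun t _ => hF2 t) (hcq.intervalIntegrable 0 γ)]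
    ring
  -- the cutoff point t₀
  obtain ⟨δ, hδdef⟩ : ∃ δ : ℝ, δ = 3 - 1/γ := ⟨_, rfl⟩
  have hδ0 : 0 ≤ δ := by
    rw [hδdef]
    have : 1/γ ≤ 3 := by rw [div_le_iff₀ hγ0]; linarith
    linarith
  have hδ1 : δ ≤ 1 := by
    rw [hδdef]
    have : 2 ≤ 1/γ := by rw [le_div_iff₀ hγ0]; linarith
    linarith
  obtain ⟨s, hsdef⟩ : ∃ s : ℝ, s = Real.sqrt (9 - 4*δ) := ⟨_, rfl⟩
  have hs2 : s^2 = 9 - 4*δ := by rw [hsdef]; exact Real.sq_sqrt (by linarith)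
  have hsnn : 0 ≤ s := by rw [hsdef]; exact Real.sqrt_nonneg _
  have hslb : 2 ≤ s := arith_sqrt_lb hs2 hsnn hδ1
  have hsub' : s ≤ 3 := arith_sqrt_ub hs2 hsnn hδ0
  obtain ⟨t0, ht0def⟩ : ∃ t0 : ℝ, t0 = (3 - s)/2 := ⟨_, rfl⟩
  have ht00 : 0 ≤ t0 := by rw [ht0def]; linarith
  have ht05 : t0 ≤ 1/2 := by rw [ht0def]; linarith
  have hq : t0^2 = 3*t0 - δ := by
    rw [ht0def]; linear_combination hs2/4
  have hδt : δ = 3*t0 - t0^2 := by linarith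
  have hγδ : γ * δ = 3*γ - 1 := by
    rw [hδdef]; field_simp
  have hγt : γ * (3 - 3*t0 + t0^2) = 1 := by
    linear_combination -hγδ + γ*hδt
  have ht0γ : t0 ≤ γ := arith_t0le hγ1 hγ2 hγ0 hq hγδ ht00 ht05
  -- weight function and antiderivatives
  set W : ℝ → ℝ := fun t => (1-t)^3/6 - (γ-t)/(6*γ) with hWdef
  set AW : ℝ → ℝ := fun t => -(1-t)^4/24 + (γ-t)^2/(12*γ) with hAWdef
  set AB : ℝ → ℝ := fun t => -(1-t)^4/24 with hABdef
  have hcW : Continuous W := by rw [hWdef]; fun_prop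
  have hdAW : ∀ t, HasDerivAt AW (W t) t := by
    intro t
    have A1 : HasDerivAt (fun u : ℝ => 1 - u) (-1) t := by
      simpa using (hasDerivAt_id t).const_sub 1
    have A2 : HasDerivAt (fun u : ℝ => γ - u) (-1) t := by
      simpa using (hasDerivAt_id t).const_sub γ
    have B1 := ((A1.pow 4).div_const 24).neg
    have B2 := (A2.pow 2).div_const (12*γ)
    have S := B1.add B2
    have hfn : AW = fun u : ℝ => -((1-u)^4/24) + (γ-u)^2/(12*γ) := by
      funext u; rw [hAWdef]; ring
    rw [hfn]
    simp only [hWdef]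
    convert S using 1
    · rfl
    · rfl
    · rfl
    ring
  have hdAB : ∀ t : ℝ, HasDerivAt AB ((1-t)^3/6) t := by
    intro t
    have A1 : HasDerivAt (fun u : ℝ => 1 - u) (-1) t := by
      simpa using (hasDerivAt_id t).const_sub 1
    have B1 := ((A1.pow 4).div_const 24).neg
    have hfn : AB = fun u : ℝ => -((1-u)^4/24) := by
      funext u; rw [hABdef]; ring
    rw [hfn]
    convert B1 using 1
    · rfl
    · rfl
    · rfl
    ring
  -- sign of the weight
  have hWneg : ∀ t ∈ Set.Icc (0:ℝ) t0, W t ≤ 0 := by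
    intro t ht
    have hnum : γ*(1-t)^3 - γ + t = -(γ*t*(t0-t)*(3-t0-t)) := by
      linear_combination (-t) * hγt
    have hWt : W t = (γ*(1-t)^3 - γ + t)/(6*γ) := by
      rw [hWdef]; field_simp; ring
    rw [hWt, hnum]
    apply div_nonpos_of_nonpos_of_nonneg _ (by linarith)
    have : 0 ≤ γ*t*(t0-t)*(3-t0-t) := by
      have h3 : 0 ≤ 3 - t0 - t := by nlinarith [ht.2, ht05]
      exact mul_nonneg (mul_nonneg (mul_nonneg hγ0.le ht.1) (by linarith [ht.2])) h3
    linarith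
  have hWpos : ∀ t ∈ Set.Icc t0 γ, 0 ≤ W t := by
    intro t ht
    have hnum : γ*(1-t)^3 - γ + t = γ*t*(t-t0)*(3-t0-t) := by
      linear_combination (-t) * hγt
    have hWt : W t = (γ*(1-t)^3 - γ + t)/(6*γ) := by
      rw [hWdef]; field_simp; ring
    rw [hWt, hnum]
    apply div_nonneg _ (by linarith)
    have h3 : 0 ≤ 3 - t0 - t := by linarith [ht.2, ht05, hγ2, ht00]
    exact mul_nonneg (mul_nonneg (mul_nonneg hγ0.le (by linarith [ht.1, ht00])) (by linarith [ht.1])) h3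
  -- pointwise decomposition of the combined weight
  have hWg_eq : ∀ a b : ℝ, ∫ t in a..b, W t * g4 t
      = (∫ t in a..b, p t) - (1/(6*γ)) * ∫ t in a..b, q t := by
    intro a b
    rw [← integral_const_mul, ← integral_sub (g := fun t => 1/(6*γ) * q t) (hcp.intervalIntegrable a b)
      ((continuous_const.mul hcq).intervalIntegrable a b)]
    apply integral_congr
    intro t _
    simp only [hWdef, hp, hq']
    ring
  have hcWg : Continuous (fun t => W t * g4 t) := hcW.mul hc4
  -- piece estimates
  have hγ1' : γ ≤ (1:ℝ) := by linarith
  have p1 : (L*r^4) * (AW t0 - AW 0) ≤ ∫ t in (0:ℝ)..t0, W t * g4 t := by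
    have hWint : ∫ t in (0:ℝ)..t0, W t = AW t0 - AW 0 :=
      integral_eq_sub_of_hasDerivAt (fun t _ => hdAW t) (hcW.intervalIntegrable _ _)
    have heq : ∫ t in (0:ℝ)..t0, W t * (L*r^4) = (AW t0 - AW 0) * (L*r^4) := by
      rw [integral_mul_const, hWint]
    have hic : IntervalIntegrable (fun t : ℝ => W t * (L*r^4)) MeasureTheory.volume 0 t0 :=
      (hcW.mul continuous_const).intervalIntegrable 0 t0
    have hmono := integral_mono_on ht00 hic (hcWg.intervalIntegrable 0 t0)
      (fun t ht => mul_le_mul_of_nonpos_left (hg4up t) (hWneg t ht))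
    rw [heq] at hmono
    linarith
  have p2 : (μ*r^4) * (AW γ - AW t0) ≤ ∫ t in t0..γ, W t * g4 t := by
    have hWint : ∫ t in t0..γ, W t = AW γ - AW t0 :=
      integral_eq_sub_of_hasDerivAt (fun t _ => hdAW t) (hcW.intervalIntegrable _ _)
    have heq : ∫ t in t0..γ, W t * (μ*r^4) = (AW γ - AW t0) * (μ*r^4) := by
      rw [integral_mul_const, hWint]
    have hic : IntervalIntegrable (fun t : ℝ => W t * (μ*r^4)) MeasureTheory.volume t0 γ :=
      (hcW.mul continuous_const).intervalIntegrable t0 γ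
    have hmono := integral_mono_on ht0γ hic (hcWg.intervalIntegrable t0 γ)
      (fun t ht => mul_le_mul_of_nonneg_left (hg4low t) (hWpos t ht))
    rw [heq] at hmono
    linarith
  have p3 : (μ*r^4) * (AB 1 - AB γ) ≤ ∫ t in γ..(1:ℝ), p t := by
    have hcB : Continuous (fun t : ℝ => (1-t)^3/6) := by fun_prop
    have hWint : ∫ t in γ..(1:ℝ), (1-t)^3/6 = AB 1 - AB γ :=
      integral_eq_sub_of_hasDerivAt (fun t _ => hdAB t) (hcB.intervalIntegrable _ _)
    have heq : ∫ t in γ..(1:ℝ), (1-t)^3/6 * (μ*r^4) = (AB 1 - AB γ) * (μ*r^4) := by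
      rw [integral_mul_const, hWint]
    have hic : IntervalIntegrable (fun t : ℝ => (1-t)^3/6 * (μ*r^4)) MeasureTheory.volume γ 1 :=
      (hcB.mul continuous_const).intervalIntegrable γ 1
    have hmono := integral_mono_on hγ1' hic (hcp.intervalIntegrable γ 1)
      (fun t ht => by
        have hw : 0 ≤ (1-t)^3/6 := by
          have : (0:ℝ) ≤ 1 - t := by linarith [ht.2]
          positivity
        have := mul_le_mul_of_nonneg_left (hg4low t) hw
        simpa [hp] using this)
    rw [heq] at hmono
    linarith
  -- splitting the integrals
  have hsplit1 : (∫ t in (0:ℝ)..t0, p t) + (∫ t in t0..γ, p t) + (∫ t in γ..(1:ℝ), p t)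
      = ∫ t in (0:ℝ)..1, p t := by
    rw [integral_add_adjacent_intervals (hcp.intervalIntegrable 0 t0)
      (hcp.intervalIntegrable t0 γ),
      integral_add_adjacent_intervals (hcp.intervalIntegrable 0 γ)
      (hcp.intervalIntegrable γ 1)]
  have hsplit2 : (∫ t in (0:ℝ)..t0, q t) + (∫ t in t0..γ, q t) = ∫ t in (0:ℝ)..γ, q t :=
    integral_add_adjacent_intervals (hcq.intervalIntegrable 0 t0) (hcq.intervalIntegrable t0 γ)
  have hd' : (∫ t in (0:ℝ)..1, p t) - (1/(6*γ)) * (∫ t in (0:ℝ)..γ, q t)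
      = (∫ t in (0:ℝ)..t0, W t * g4 t) + (∫ t in t0..γ, W t * g4 t)
        + (∫ t in γ..(1:ℝ), p t) := by
    rw [← hsplit1, ← hsplit2, hWg_eq, hWg_eq]
    ring
  -- the numeric estimate
  have e1 : AW t0 - AW 0 = (-(γ*(1-t0)^4) + 2*(γ-t0)^2 + γ - 2*γ^2) / (24*γ) := by
    simp only [hAWdef]
    field_simp
    ring
  have hM : 0 ≤ 182 - 307*t0 + 144*t0^2 - 16*t0^3 := arith_M ht00 ht05
  have hkey2 : (-(γ*(1-t0)^4) + 2*(γ-t0)^2 + γ - 2*γ^2) + (48/375)*γ*(3*t0-t0^2)^3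
      = γ*t0^3*(182 - 307*t0 + 144*t0^2 - 16*t0^3)/125 := by
    linear_combination (-2*t0^2) * hγt
  have claimB : 0 ≤ AW t0 - AW 0 + (2/375)*δ^3 := by
    rw [e1, hδt]
    have e2 : (-(γ*(1-t0)^4) + 2*(γ-t0)^2 + γ - 2*γ^2)/(24*γ) + (2/375)*(3*t0-t0^2)^3
        = ((-(γ*(1-t0)^4) + 2*(γ-t0)^2 + γ - 2*γ^2) + (48/375)*γ*(3*t0-t0^2)^3)/(24*γ) := by
      field_simp
      ring
    rw [e2, hkey2]
    apply div_nonneg _ (by linarith)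
    exact div_nonneg (mul_nonneg (mul_nonneg hγ0.le (pow_nonneg ht00 3)) hM) (by norm_num)
  have claimA : (AW γ - AW 0) + (AB 1 - AB γ) = (1-2*γ)/24 := by
    simp only [hAWdef, hABdef]
    field_simp
    ring
  have hLμ : (0:ℝ) ≤ L - μ := by linarith
  have hr4 : (0:ℝ) ≤ r^4 := by positivity
  have hsum' : ((AW t0 - AW 0) + (AW γ - AW t0)) + (AB 1 - AB γ) = (1-2*γ)/24 := by
    rw [← claimA]; ring
  have numeric : (L*r^4)*(AW t0 - AW 0) + (μ*r^4)*(AW γ - AW t0) + (μ*r^4)*(AB 1 - AB γ)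
      ≥ μ*r^4*(1-2*γ)/24 - (L-μ)*r^4*(2/375)*δ^3 :=
    arith_numeric hμ hμL hr4 hsum' claimB
  have hkey : (∫ t in (0:ℝ)..1, p t) - (1/(6*γ)) * (∫ t in (0:ℝ)..γ, q t)
      ≥ μ*r^4*(1-2*γ)/24 - (L-μ)*r^4*(2/375)*δ^3 := by
    rw [hd']
    exact le_trans numeric (add_le_add (add_le_add p1 p2) p3)
  -- final assembly
  have hE2c : (1/(6*γ)) * (∫ t in (0:ℝ)..γ, q t)
      = (1/(6*γ))*g2 γ - (1/(6*γ))*g2 0 - (1/6)*g3 0 := by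
    rw [hI2]
    field_simp
  have hg2γc : 0 ≤ (1/(6*γ)) * g2 γ := by positivity
  have hfy : f y = g0 1 := by rw [hg0]; simp [hh]
  have hfx : f x = g0 0 := by rw [hg0]; simp
  have hfd : fderiv ℝ f x h = g1 0 := by
    rw [hg1]
    simp [iteratedFDeriv_one_apply]
  have hg20 : iteratedFDeriv ℝ 2 f x ![h, h] = g2 0 := by
    rw [hg2]
    simp [hv2]
  have hco : (3*γ-1)/(6*γ) * g2 0 = (1/2)*g2 0 - (1/(6*γ))*g2 0 := by
    field_simp
    ring
  have hCeq : (μ/24)*r^4*((1 - 2*γ) - (16/125)*(L/μ - 1)*((3*γ-1)/γ)^3)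
      = μ*r^4*(1-2*γ)/24 - (L-μ)*r^4*(2/375)*δ^3 := by
    have hδ' : (3*γ-1)/γ = δ := by
      rw [hδdef]; field_simp
    rw [hδ']
    field_simp
    ring
  rw [ge_iff_le, hfy, hfx, hfd, hg20, hco, hCeq]
  linarith [hI1, hE2c, hg2γc, hkey]
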